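/- In the Face Lemma setup (p₁, p₂ ∈ ℂⁿ column vectors; q₁†, q₂† row vectors; qᵢ†pⱼ ≠ 0 for i,j ∈ {1,2}; α₁, α₂, β₁, β₂ ∈ ℂ with α₁+α₂ ≠ 0, β₁+β₂ ≠ 0, α₁+β₁ ≠ 0; κ := α₁+α₂+β₁+β₂), define P₁ = (α₁·p₁/(q₁†p₁) + α₂·p₂/(q₁†p₂))/(α₁+α₂), P₂ = (β₁·p₁/(q₂†p₁) + β₂·p₂/(q₂†p₂))/(β₁+β₂), Q₁† = (α₁·q₁†/(q₁†p₁) + β₁·q₂†/(q₂†p₁))/(α₁+β₁). Then the pairings are given explicitly by: Q₁†·P₁ = (−1/((α₁+α₂)(α₁+β₁)))·(α₁(β₂−κ)(q₂†p₁)(q₁†p₂) − α₂β₁(q₁†p₁)(q₂†p₂))/((q₁†p₁)(q₂†p₁)(q₁†p₂)), and Q₁†·P₂ = (1/((β₁+β₂)(α₁+β₁)))·(α₁β₂(q₂†p₁)(q₁†p₂) − (α₂−κ)β₁(q₁†p₁)(q₂†p₂))/((q₁†p₁)(q₂†p₁)(q₂†p₂)). -/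

import Mathlib

open Matrix

/-- Face Lemma pairing computations: explicit formulas for `Q₁†·P₁` and
`Q₁†·P₂` in terms of the inner face data. -/
theorem face_lemma_pairings (n : ℕ) (p₁ p₂ q₁ q₂ : Fin n → ℂ)
    (h11 : q₁ ⬝ᵥ p₁ ≠ 0) (h12 : q₁ ⬝ᵥ p₂ ≠ 0)
    (h21 : q₂ ⬝ᵥ p₁ ≠ 0) (h22 : q₂ ⬝ᵥ p₂ ≠ 0)
    (α₁ α₂ β₁ β₂ : ℂ)
    (hαα : α₁ + α₂ ≠ 0) (hββ : β₁ + β₂ ≠ 0) (hαβ : α₁ + β₁ ≠ 0)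
    (κ : ℂ) (hκ : κ = α₁ + α₂ + β₁ + β₂)
    (P₁ P₂ Q₁ : Fin n → ℂ)
    (hP₁ : P₁ = (α₁ + α₂)⁻¹ •
        (α₁ • ((q₁ ⬝ᵥ p₁)⁻¹ • p₁) + α₂ • ((q₁ ⬝ᵥ p₂)⁻¹ • p₂)))
    (hP₂ : P₂ = (β₁ + β₂)⁻¹ •
        (β₁ • ((q₂ ⬝ᵥ p₁)⁻¹ • p₁) + β₂ • ((q₂ ⬝ᵥ p₂)⁻¹ • p₂)))
    (hQ₁ : Q₁ = (α₁ + β₁)⁻¹ •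
        (α₁ • ((q₁ ⬝ᵥ p₁)⁻¹ • q₁) + β₁ • ((q₂ ⬝ᵥ p₁)⁻¹ • q₂))) :
    Q₁ ⬝ᵥ P₁ =
      (-1 / ((α₁ + α₂) * (α₁ + β₁))) *
        ((α₁ * (β₂ - κ) * (q₂ ⬝ᵥ p₁) * (q₁ ⬝ᵥ p₂) -
            α₂ * β₁ * (q₁ ⬝ᵥ p₁) * (q₂ ⬝ᵥ p₂)) /
          ((q₁ ⬝ᵥ p₁) * (q₂ ⬝ᵥ p₁) * (q₁ ⬝ᵥ p₂))) ∧
    Q₁ ⬝ᵥ P₂ =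
      (1 / ((β₁ + β₂) * (α₁ + β₁))) *
        ((α₁ * β₂ * (q₂ ⬝ᵥ p₁) * (q₁ ⬝ᵥ p₂) -
            (α₂ - κ) * β₁ * (q₁ ⬝ᵥ p₁) * (q₂ ⬝ᵥ p₂)) /
          ((q₁ ⬝ᵥ p₁) * (q₂ ⬝ᵥ p₁) * (q₂ ⬝ᵥ p₂))) := by
  subst hκ hP₁ hP₂ hQ₁
  simp only [smul_dotProduct, dotProduct_smul, dotProduct_add, add_dotProduct,
    smul_eq_mul]
  have hne : ∀ x y : ℂ, x ≠ 0 → y ≠ 0 → x * y ≠ 0 := fun _ _ => mul_ne_zero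
  constructor
  · field_simp
    ring
  · field_simp
    ring
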